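/- Under the local conditions of the W-method (γ = sep(D̃⋆) > 0, η = ‖Y_W − Y⋆‖_F ≤ γ/4, with D̃⋆ = D̂ + diag(Y⋆), D̃ = D̂ + diag(Y_W)), the updated residual of the W-method satisfies ‖V̂⁻¹(A Ṽ − Ṽ D̃)‖_F ≤ η + 2(‖Y⋆‖_F + η)²/γ, where Ṽ = V̂(I + Ẽ_W) and Ẽ_W is the componentwise W-method update. -/

import Mathlib

open Matrix

noncomputable def frob {n : ℕ} (M : Matrix (Fin n) (Fin n) ℂ) : ℝ :=
  Real.sqrt (∑ i, ∑ j, ‖M i j‖ ^ 2)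

attribute [local instance] Matrix.frobeniusSeminormedAddCommGroup

lemma frob_eq_norm {n : ℕ} (M : Matrix (Fin n) (Fin n) ℂ) : frob M = ‖M‖ := by
  rw [Matrix.frobenius_norm_def, frob, Real.sqrt_eq_rpow]
  congr 1
  refine Finset.sum_congr rfl fun i _ => Finset.sum_congr rfl fun j _ => ?_
  rw [show ((2:ℝ)) = ((2:ℕ):ℝ) by norm_num, Real.rpow_natCast]

lemma frob_nonneg {n : ℕ} (M : Matrix (Fin n) (Fin n) ℂ) : 0 ≤ frob M :=
  Real.sqrt_nonneg _

lemma frob_add_le {n : ℕ} (M N : Matrix (Fin n) (Fin n) ℂ) :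
    frob (M + N) ≤ frob M + frob N := by
  simp only [frob_eq_norm]; exact norm_add_le _ _

lemma frob_mul_le {n : ℕ} (M N : Matrix (Fin n) (Fin n) ℂ) :
    frob (M * N) ≤ frob M * frob N := by
  simp only [frob_eq_norm]; exact Matrix.frobenius_norm_mul _ _

lemma frob_neg {n : ℕ} (M : Matrix (Fin n) (Fin n) ℂ) : frob (-M) = frob M := by
  simp only [frob_eq_norm]; exact norm_neg _

lemma entry_le_frob {n : ℕ} (M : Matrix (Fin n) (Fin n) ℂ) (i j : Fin n) :
    ‖M i j‖ ≤ frob M := by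
  rw [frob]
  have h1 : ‖M i j‖ ^ 2 ≤ ∑ i', ∑ j', ‖M i' j'‖ ^ 2 := by
    calc ‖M i j‖ ^ 2 ≤ ∑ j', ‖M i j'‖ ^ 2 :=
          Finset.single_le_sum (f := fun j' => ‖M i j'‖ ^ 2)
            (fun _ _ => sq_nonneg _) (Finset.mem_univ j)
      _ ≤ _ := Finset.single_le_sum (f := fun i' => ∑ j', ‖M i' j'‖ ^ 2)
          (fun _ _ => Finset.sum_nonneg fun _ _ => sq_nonneg _) (Finset.mem_univ i)
  calc ‖M i j‖ = Real.sqrt (‖M i j‖ ^ 2) := (Real.sqrt_sq (norm_nonneg _)).symm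
    _ ≤ _ := Real.sqrt_le_sqrt h1

lemma frob_le_frob {n : ℕ} {M N : Matrix (Fin n) (Fin n) ℂ}
    (h : ∀ i j, ‖M i j‖ ≤ ‖N i j‖) : frob M ≤ frob N := by
  apply Real.sqrt_le_sqrt
  refine Finset.sum_le_sum fun i _ => Finset.sum_le_sum fun j _ => ?_
  exact pow_le_pow_left₀ (norm_nonneg _) (h i j) 2

lemma frob_le_mul_frob {n : ℕ} {M N : Matrix (Fin n) (Fin n) ℂ} {c : ℝ} (hc : 0 ≤ c)
    (h : ∀ i j, ‖M i j‖ ≤ c * ‖N i j‖) : frob M ≤ c * frob N := by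
  have h1 : frob M ≤ Real.sqrt (∑ i, ∑ j, (c * ‖N i j‖) ^ 2) := by
    apply Real.sqrt_le_sqrt
    refine Finset.sum_le_sum fun i _ => Finset.sum_le_sum fun j _ => ?_
    exact pow_le_pow_left₀ (norm_nonneg _) (h i j) 2
  refine h1.trans_eq ?_
  have : ∑ i, ∑ j, (c * ‖N i j‖) ^ 2 = c ^ 2 * ∑ i, ∑ j, ‖N i j‖ ^ 2 := by
    simp_rw [mul_pow, Finset.mul_sum]
  rw [this, Real.sqrt_mul (sq_nonneg c), Real.sqrt_sq hc, frob]

theorem W_method_residual_bound {n : ℕ}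
    (A V W : Matrix (Fin n) (Fin n) ℂ) (hV : IsUnit V.det)
    (d : Fin n → ℂ)
    (R Ystar YW : Matrix (Fin n) (Fin n) ℂ)
    (hR : R = A * V - V * Matrix.diagonal d)
    (hYstar : Ystar = V⁻¹ * R)
    (hYW : YW = Wᴴ * R)
    (dstar dt : Fin n → ℂ)
    (hdstar : ∀ i, dstar i = d i + Ystar i i)
    (hdt : ∀ i, dt i = d i + YW i i)
    (γ η : ℝ) (hγpos : 0 < γ)
    (hγ : ∀ i j, i ≠ j → γ ≤ ‖dstar i - dstar j‖)
    (hη : η = frob (YW - Ystar))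
    (hloc : η ≤ γ / 4)
    (EW : Matrix (Fin n) (Fin n) ℂ)
    (hEW : ∀ i j, EW i j = if i = j then 0 else YW i j / (dt j - dt i))
    (Vt : Matrix (Fin n) (Fin n) ℂ)
    (hVt : Vt = V * (1 + EW)) :
    frob (V⁻¹ * (A * Vt - Vt * Matrix.diagonal dt))
      ≤ η + 2 * (frob Ystar + η) ^ 2 / γ := by
  have hηnn : 0 ≤ η := hη ▸ frob_nonneg _
  have hVinv : V⁻¹ * V = 1 := Matrix.nonsing_inv_mul V hV
  -- diagonal entries deviation bound
  have hdiagb : ∀ i : Fin n, ‖YW i i - Ystar i i‖ ≤ η := by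
    intro i
    have := entry_le_frob (YW - Ystar) i i
    simpa [hη, Matrix.sub_apply] using this
  -- separation of dt
  have hsep : ∀ i j, i ≠ j → γ / 2 ≤ ‖dt i - dt j‖ := by
    intro i j hij
    have key : dt i - dt j = (dstar i - dstar j)
        + ((YW i i - Ystar i i) - (YW j j - Ystar j j)) := by
      rw [hdt, hdt, hdstar, hdstar]; ring
    have h1 : ‖(YW i i - Ystar i i) - (YW j j - Ystar j j)‖ ≤ η + η :=
      (norm_sub_le _ _).trans (add_le_add (hdiagb i) (hdiagb j))
    have e : dstar i - dstar j = (dt i - dt j)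
        - ((YW i i - Ystar i i) - (YW j j - Ystar j j)) := by
      rw [hdt, hdt, hdstar, hdstar]; ring
    have h2 : ‖dstar i - dstar j‖
        ≤ ‖dt i - dt j‖ + ‖(YW i i - Ystar i i) - (YW j j - Ystar j j)‖ := by
      rw [e]; exact norm_sub_le _ _
    have := hγ i j hij
    linarith
  have hne : ∀ i j : Fin n, i ≠ j → dt j - dt i ≠ 0 := by
    intro i j hij h0
    have := hsep j i (Ne.symm hij)
    rw [h0] at this
    simp at this
    linarith
  set Δ : Matrix (Fin n) (Fin n) ℂ := Matrix.diagonal (fun i => YW i i) with hΔ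
  -- commutator identity
  have hDt : Matrix.diagonal dt * EW - EW * Matrix.diagonal dt = Δ - YW := by
    ext i j
    simp only [Matrix.sub_apply, Matrix.diagonal_mul, Matrix.mul_diagonal, hΔ,
      Matrix.diagonal_apply]
    by_cases hij : i = j
    · subst hij; simp [hEW]
    · have hne' := hne i j hij
      rw [hEW i j]
      simp only [hij, if_neg hij, if_false]
      field_simp
      ring
  have hAV : V⁻¹ * A * V = Ystar + Matrix.diagonal d := by
    rw [hYstar, hR, Matrix.mul_sub]
    rw [← Matrix.mul_assoc, ← Matrix.mul_assoc, hVinv, Matrix.one_mul]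
    noncomm_ring
  have hd' : Matrix.diagonal d = Matrix.diagonal dt - Δ := by
    ext i j
    simp only [Matrix.sub_apply, hΔ, Matrix.diagonal_apply]
    by_cases hij : i = j
    · subst hij; simp [hdt]
    · simp [hij]
  -- key identity
  have key : V⁻¹ * (A * Vt - Vt * Matrix.diagonal dt)
      = (Ystar - YW) + (Ystar - Δ) * EW := by
    have h1 : V⁻¹ * (A * Vt - Vt * Matrix.diagonal dt)
        = (V⁻¹ * A * V) * (1 + EW) - (V⁻¹ * V) * ((1 + EW) * Matrix.diagonal dt) := by
      rw [hVt]; noncomm_ring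
    rw [h1, hAV, hVinv, Matrix.one_mul, hd']
    have h2 : (Ystar + (Matrix.diagonal dt - Δ)) * (1 + EW)
          - (1 + EW) * Matrix.diagonal dt
        = ((Ystar - YW) + (Ystar - Δ) * EW)
          + ((Matrix.diagonal dt * EW - EW * Matrix.diagonal dt) - (Δ - YW)) := by
      noncomm_ring
    rw [h2, hDt, sub_self, add_zero]
  -- norm bounds
  have hb0 : frob (Ystar - YW) = η := by
    rw [← neg_sub YW Ystar, frob_neg, hη]
  have hboffY : frob (Ystar - Matrix.diagonal (fun i => Ystar i i)) ≤ frob Ystar := by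
    apply frob_le_frob
    intro i j
    by_cases hij : i = j
    · subst hij; simp [Matrix.sub_apply, Matrix.diagonal_apply]
    · simp [Matrix.sub_apply, Matrix.diagonal_apply, hij]
  have hbdiag : frob (Matrix.diagonal (fun i => Ystar i i - YW i i)) ≤ η := by
    rw [hη]
    apply frob_le_frob
    intro i j
    by_cases hij : i = j
    · subst hij
      simp only [Matrix.diagonal_apply_eq, Matrix.sub_apply]
      rw [norm_sub_rev]
    · simp [Matrix.diagonal_apply, hij]
  have hb1 : frob (Ystar - Δ) ≤ frob Ystar + η := by
    have hdec : Ystar - Δ = (Ystar - Matrix.diagonal (fun i => Ystar i i))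
        + Matrix.diagonal (fun i => Ystar i i - YW i i) := by
      ext i j
      simp only [Matrix.sub_apply, Matrix.add_apply, hΔ, Matrix.diagonal_apply]
      by_cases hij : i = j <;> simp [hij] <;> ring
    rw [hdec]
    exact (frob_add_le _ _).trans (add_le_add hboffY hbdiag)
  have hb3 : frob (YW - Δ) ≤ frob Ystar + η := by
    have hdec : YW - Δ = (Ystar - Matrix.diagonal (fun i => Ystar i i))
        + ((YW - Ystar) - Matrix.diagonal (fun i => YW i i - Ystar i i)) := by
      ext i j
      simp only [Matrix.sub_apply, Matrix.add_apply, hΔ, Matrix.diagonal_apply]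
      by_cases hij : i = j <;> simp [hij] <;> ring
    have h4 : frob ((YW - Ystar) - Matrix.diagonal (fun i => YW i i - Ystar i i)) ≤ η := by
      rw [hη]
      apply frob_le_frob
      intro i j
      by_cases hij : i = j
      · subst hij; simp [Matrix.sub_apply, Matrix.diagonal_apply]
      · simp [Matrix.sub_apply, Matrix.diagonal_apply, hij]
    rw [hdec]
    exact (frob_add_le _ _).trans (add_le_add hboffY h4)
  have hb2 : frob EW ≤ (2 / γ) * frob (YW - Δ) := by
    apply frob_le_mul_frob (by positivity)
    intro i j
    by_cases hij : i = j
    · subst hij; simp [hEW, hΔ, Matrix.sub_apply]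
    · rw [hEW i j, if_neg hij]
      have hentry : (YW - Δ) i j = YW i j := by
        simp [hΔ, Matrix.sub_apply, Matrix.diagonal_apply, hij]
      rw [hentry, norm_div]
      have hs : γ / 2 ≤ ‖dt j - dt i‖ := hsep j i (Ne.symm hij)
      have hpos : (0:ℝ) < γ / 2 := by linarith
      calc ‖YW i j‖ / ‖dt j - dt i‖ ≤ ‖YW i j‖ / (γ / 2) :=
            div_le_div_of_nonneg_left (norm_nonneg _) hpos hs
        _ = 2 / γ * ‖YW i j‖ := by field_simp
  -- final combination
  have hEWb : frob EW ≤ 2 / γ * (frob Ystar + η) :=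
    hb2.trans (mul_le_mul_of_nonneg_left hb3 (by positivity))
  rw [key]
  have step1 : frob (Ystar - YW + (Ystar - Δ) * EW)
      ≤ η + frob (Ystar - Δ) * frob EW := by
    refine (frob_add_le _ _).trans ?_
    rw [hb0]
    exact add_le_add (le_refl η) (frob_mul_le _ _)
  have step2 : frob (Ystar - Δ) * frob EW
      ≤ (frob Ystar + η) * (2 / γ * (frob Ystar + η)) := by
    apply mul_le_mul hb1 hEWb (frob_nonneg _)
    have := frob_nonneg Ystar
    linarith
  have heq : (frob Ystar + η) * (2 / γ * (frob Ystar + η))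
      = 2 * (frob Ystar + η) ^ 2 / γ := by
    field_simp
  linarith [step1, step2, heq ▸ step2]
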